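/- arXiv:2312.13609 — 2 statements merged into one kernel-verified Lean document; each statement's English description precedes it below -/
import Mathlib

section
/- Let K(a_{n,k}) be a Köthe space and Λ₁(β) a power series space of finite type. Let θ be a sequence with θ_0 ≠ 0. The lower triangular Toeplitz operator T̂_θ : K(a_{n,k}) → Λ₁(β) is continuous if and only if θ ∈ Λ₁(β) and for every k ∈ ℕ there exist m ∈ ℕ and C > 0 such that e^{-β_n/k} ≤ C a_{n,m} for all n ∈ ℕ. -/
open scoped BigOperators
noncomputable section

/-- A Köthe matrix: non-negative entries, each row eventually positive,
rows non-decreasing in the second index. -/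
structure IsKotheMatrix (a : ℕ → ℕ → ℝ) : Prop where
  nonneg : ∀ n k, 0 ≤ a n k
  pos : ∀ n, ∃ k, 0 < a n k
  mono : ∀ n k, a n k ≤ a n (k + 1)

/-- Membership in the Köthe space `K(a)`. -/
def InKothe (a : ℕ → ℕ → ℝ) (x : ℕ → ℝ) : Prop :=
  ∀ k, Summable fun n => |x n| * a n k

/-- The `k`-th seminorm of the Köthe space `K(a)`. -/
def kNorm (a : ℕ → ℕ → ℝ) (k : ℕ) (x : ℕ → ℝ) : ℝ :=
  ∑' n, |x n| * a n k

/-- Grothendieck–Pietsch nuclearity criterion for a Köthe space. -/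
def IsNuclearKothe (a : ℕ → ℕ → ℝ) : Prop :=
  ∀ k, ∃ l, k < l ∧ Summable fun n => a n k / a n l

/-- The `n`-th unit vector. -/
def unitVec (n : ℕ) : ℕ → ℝ := fun j => if j = n then 1 else 0

/-- Weight of the finite type power series space `Λ₁(β)`. -/
def finW (β : ℕ → ℝ) (k : ℕ) (n : ℕ) : ℝ := Real.exp (-(β n) / (k : ℝ))

/-- Weight of the infinite type power series space `Λ_∞(β)`. -/
def infW (β : ℕ → ℝ) (k : ℕ) (n : ℕ) : ℝ := Real.exp ((k : ℝ) * β n)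

/-- The `k`-th seminorm of `Λ₁(β)` (for `0 < k`). -/
def finNorm (β : ℕ → ℝ) (k : ℕ) (x : ℕ → ℝ) : ℝ := ∑' n, |x n| * finW β k n

/-- The `k`-th seminorm of `Λ_∞(β)`. -/
def infNorm (β : ℕ → ℝ) (k : ℕ) (x : ℕ → ℝ) : ℝ := ∑' n, |x n| * infW β k n

/-- Membership in `Λ₁(β)`. -/
def memFin (β : ℕ → ℝ) (x : ℕ → ℝ) : Prop :=
  ∀ k : ℕ, 0 < k → Summable fun n => |x n| * finW β k n

/-- Membership in `Λ_∞(β)`. -/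
def memInf (β : ℕ → ℝ) (x : ℕ → ℝ) : Prop :=
  ∀ k : ℕ, 0 < k → Summable fun n => |x n| * infW β k n

/-- Lower triangular Toeplitz operator `T̂_θ`, `T̂_θ e_n = ∑_{j ≥ n} θ_{j-n} e_j`. -/
def hatT (θ : ℕ → ℝ) (x : ℕ → ℝ) : ℕ → ℝ :=
  fun j => ∑ i ∈ Finset.range (j + 1), θ (j - i) * x i

/-- Upper triangular Toeplitz operator `Ť_θ`, `Ť_θ e_n = ∑_{j ≤ n} θ_{n-j} e_j`. -/
def checkT (θ : ℕ → ℝ) (x : ℕ → ℝ) : ℕ → ℝ :=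
  fun j => ∑' i, θ i * x (j + i)

/-- Operator defined by a matrix acting on sequences. -/
def matOp (t : ℕ → ℕ → ℝ) (x : ℕ → ℝ) : ℕ → ℝ :=
  fun j => ∑' n, t j n * x n

/-- The growth condition (3.5): `β_s ≤ M (β_{s-t} + β_t)` for all `s > t`. -/
def GrowthCond (β : ℕ → ℝ) (M : ℕ) : Prop :=
  ∀ t s : ℕ, t < s → β s ≤ (M : ℝ) * (β (s - t) + β t)

lemma finW_pos (β : ℕ → ℝ) (k n : ℕ) : 0 < finW β k n := Real.exp_pos _

lemma finW_split (β : ℕ → ℝ) (hβm : Monotone β) {k : ℕ} (hk : 0 < k)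
    {i j : ℕ} (hij : i ≤ j) :
    finW β k j ≤ finW β (2 * k) (j - i) * finW β (2 * k) i := by
  unfold finW
  rw [← Real.exp_add, Real.exp_le_exp]
  have h1 : β (j - i) ≤ β j := hβm (Nat.sub_le j i)
  have h2 : β i ≤ β j := hβm hij
  have hk' : (0 : ℝ) < (k : ℝ) := by exact_mod_cast hk
  have hcast : ((2 * k : ℕ) : ℝ) = 2 * (k : ℝ) := by push_cast; ring
  rw [hcast, ← add_div, div_le_div_iff₀ hk' (by linarith)]
  ring_nf
  nlinarith

/-- Key convolution estimate for `hatT` with finite-type weights. -/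
lemma hatT_bound (β : ℕ → ℝ) (hβm : Monotone β) (θ x : ℕ → ℝ) {k : ℕ} (hk : 0 < k)
    (hf : Summable fun s => |θ s| * finW β (2 * k) s)
    (hg : Summable fun i => |x i| * finW β (2 * k) i) :
    Summable (fun j => |hatT θ x j| * finW β k j) ∧
      ∑' j, |hatT θ x j| * finW β k j ≤
        (∑' s, |θ s| * finW β (2 * k) s) * ∑' i, |x i| * finW β (2 * k) i := by
  set f : ℕ → ℝ := fun s => |θ s| * finW β (2 * k) s with hfdef
  set g : ℕ → ℝ := fun i => |x i| * finW β (2 * k) i with hgdef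
  have hfn : ∀ s, 0 ≤ f s := fun s => mul_nonneg (abs_nonneg _) (finW_pos _ _ _).le
  have hgn : ∀ s, 0 ≤ g s := fun s => mul_nonneg (abs_nonneg _) (finW_pos _ _ _).le
  have hf' : Summable fun s => ‖f s‖ := by
    simpa [Real.norm_eq_abs, abs_of_nonneg (hfn _)] using hf
  have hg' : Summable fun s => ‖g s‖ := by
    simpa [Real.norm_eq_abs, abs_of_nonneg (hgn _)] using hg
  set G : ℕ → ℝ := fun j => ∑ i ∈ Finset.range (j + 1), f i * g (j - i) with hGdef
  have hGsum : Summable G := (summable_norm_sum_mul_range_of_summable_norm hf' hg').of_norm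
  have htsum : ∑' j, G j = (∑' s, f s) * ∑' i, g i :=
    (tsum_mul_tsum_eq_tsum_sum_range_of_summable_norm hf' hg').symm
  have hle : ∀ j, |hatT θ x j| * finW β k j ≤ G j := by
    intro j
    have step1 : |hatT θ x j| * finW β k j ≤
        ∑ i ∈ Finset.range (j + 1), f (j - i) * g i := by
      calc |hatT θ x j| * finW β k j
          ≤ (∑ i ∈ Finset.range (j + 1), |θ (j - i) * x i|) * finW β k j :=
            mul_le_mul_of_nonneg_right (Finset.abs_sum_le_sum_abs _ _) (finW_pos _ _ _).le
        _ = ∑ i ∈ Finset.range (j + 1), |θ (j - i) * x i| * finW β k j := by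
            rw [Finset.sum_mul]
        _ ≤ ∑ i ∈ Finset.range (j + 1), f (j - i) * g i := by
            refine Finset.sum_le_sum fun i hi => ?_
            have hij : i ≤ j := Nat.lt_succ_iff.mp (Finset.mem_range.mp hi)
            have key := finW_split β hβm hk hij
            calc |θ (j - i) * x i| * finW β k j
                ≤ |θ (j - i) * x i| * (finW β (2 * k) (j - i) * finW β (2 * k) i) :=
                  mul_le_mul_of_nonneg_left key (abs_nonneg _)
              _ = f (j - i) * g i := by
                  simp only [hfdef, hgdef, abs_mul]; ring
    refine step1.trans (le_of_eq ?_)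
    have := Finset.sum_range_reflect (fun i => f (j - i) * g i) (j + 1)
    rw [← this]
    refine Finset.sum_congr rfl fun i hi => ?_
    have hij : i ≤ j := Nat.lt_succ_iff.mp (Finset.mem_range.mp hi)
    have h1 : j + 1 - 1 - i = j - i := by omega
    have h2 : j - (j - i) = i := Nat.sub_sub_self hij
    rw [h1, h2]
  have hSum : Summable (fun j => |hatT θ x j| * finW β k j) :=
    Summable.of_nonneg_of_le (fun j => mul_nonneg (abs_nonneg _) (finW_pos _ _ _).le) hle hGsum
  exact ⟨hSum, by rw [← htsum]; exact Summable.tsum_le_tsum hle hSum hGsum⟩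

lemma inKothe_unit (a : ℕ → ℕ → ℝ) (n : ℕ) : InKothe a (unitVec n) := by
  intro k
  refine summable_of_ne_finset_zero (s := {n}) fun b hb => ?_
  simp only [Finset.mem_singleton] at hb
  simp [unitVec, hb]

lemma hatT_unit (θ : ℕ → ℝ) (n : ℕ) :
    hatT θ (unitVec n) = fun j => if n ≤ j then θ (j - n) else 0 := by
  funext j
  simp only [hatT, unitVec, mul_ite, mul_one, mul_zero]
  rw [Finset.sum_ite_eq' (Finset.range (j + 1)) n (fun i => θ (j - i))]
  simp [Nat.lt_succ_iff]

/-- `T̂_θ : K(a) → Λ₁(β)` is continuous iff `θ ∈ Λ₁(β)` and for every `k`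
there are `m`, `C > 0` with `e^{-β_n/k} ≤ C a_{n,m}` for all `n`. -/
theorem stmt3 (a : ℕ → ℕ → ℝ) (ha : IsKotheMatrix a)
    (β : ℕ → ℝ) (hβ0 : ∀ n, 0 ≤ β n) (hβm : Monotone β)
    (hβi : Filter.Tendsto β Filter.atTop Filter.atTop)
    (θ : ℕ → ℝ) (hθ : θ 0 ≠ 0) :
    ((∀ x, InKothe a x → memFin β (hatT θ x)) ∧
      ∀ k : ℕ, 0 < k → ∃ m, ∃ C > 0, ∀ x, InKothe a x →
        finNorm β k (hatT θ x) ≤ C * kNorm a m x)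
    ↔ (memFin β θ ∧
       ∀ k : ℕ, 0 < k → ∃ m, ∃ C > 0, ∀ n, finW β k n ≤ C * a n m) := by
  constructor
  · rintro ⟨H1, H2⟩
    constructor
    · intro k hk
      have h0 := H1 (unitVec 0) (inKothe_unit a 0) k hk
      have he : hatT θ (unitVec 0) = θ := by
        rw [hatT_unit]; funext j; simp
      rwa [he] at h0
    · intro k hk
      obtain ⟨m, C, hC, hest⟩ := H2 k hk
      refine ⟨m, C / |θ 0|, div_pos hC (abs_pos.mpr hθ), fun n => ?_⟩
      have hs := H1 (unitVec n) (inKothe_unit a n) k hk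
      have hterm : |hatT θ (unitVec n) n| * finW β k n = |θ 0| * finW β k n := by
        rw [hatT_unit]; simp
      have h1 : |θ 0| * finW β k n ≤ finNorm β k (hatT θ (unitVec n)) := by
        rw [← hterm]
        exact Summable.le_tsum hs n fun j _ => mul_nonneg (abs_nonneg _) (finW_pos _ _ _).le
      have h2 : finNorm β k (hatT θ (unitVec n)) ≤ C * kNorm a m (unitVec n) :=
        hest (unitVec n) (inKothe_unit a n)
      have h3 : kNorm a m (unitVec n) = a n m := by
        unfold kNorm
        rw [tsum_eq_single n (fun b hb => by simp [unitVec, hb])]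
        simp [unitVec]
      rw [h3] at h2
      have hθp : (0 : ℝ) < |θ 0| := abs_pos.mpr hθ
      rw [div_mul_eq_mul_div, le_div_iff₀ hθp]
      nlinarith [h1.trans h2]
  · rintro ⟨hθf, hw⟩
    have key : ∀ k : ℕ, 0 < k → ∃ m, ∃ C > 0, ∀ x, InKothe a x →
        Summable (fun j => |hatT θ x j| * finW β k j) ∧
          finNorm β k (hatT θ x) ≤ C * kNorm a m x := by
      intro k hk
      obtain ⟨m, C, hC, hwm⟩ := hw (2 * k) (by omega)
      have Sθ := hθf (2 * k) (by omega)
      have hθnn0 : 0 ≤ ∑' s, |θ s| * finW β (2 * k) s :=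
        tsum_nonneg fun s => mul_nonneg (abs_nonneg _) (finW_pos _ _ _).le
      refine ⟨m, ((∑' s, |θ s| * finW β (2 * k) s) + 1) * C,
        mul_pos (by linarith) hC, fun x hx => ?_⟩
      have hgle : ∀ i, |x i| * finW β (2 * k) i ≤ C * (|x i| * a i m) := by
        intro i
        have := hwm i
        have hxa : 0 ≤ |x i| := abs_nonneg _
        calc |x i| * finW β (2 * k) i ≤ |x i| * (C * a i m) :=
              mul_le_mul_of_nonneg_left this hxa
          _ = C * (|x i| * a i m) := by ring
      have hxm : Summable fun i => C * (|x i| * a i m) := (hx m).mul_left C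
      have hg : Summable fun i => |x i| * finW β (2 * k) i :=
        Summable.of_nonneg_of_le
          (fun i => mul_nonneg (abs_nonneg _) (finW_pos _ _ _).le) hgle hxm
      obtain ⟨hS, hB⟩ := hatT_bound β hβm θ x hk Sθ hg
      refine ⟨hS, ?_⟩
      have hg_le : (∑' i, |x i| * finW β (2 * k) i) ≤ C * kNorm a m x := by
        have := Summable.tsum_le_tsum hgle hg hxm
        rwa [tsum_mul_left] at this
      have hθnn : 0 ≤ ∑' s, |θ s| * finW β (2 * k) s :=
        tsum_nonneg fun s => mul_nonneg (abs_nonneg _) (finW_pos _ _ _).le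
      have hgnn : 0 ≤ ∑' i, |x i| * finW β (2 * k) i :=
        tsum_nonneg fun i => mul_nonneg (abs_nonneg _) (finW_pos _ _ _).le
      calc finNorm β k (hatT θ x)
          ≤ (∑' s, |θ s| * finW β (2 * k) s) * ∑' i, |x i| * finW β (2 * k) i := hB
        _ ≤ ((∑' s, |θ s| * finW β (2 * k) s) + 1) * (C * kNorm a m x) :=
            mul_le_mul (by linarith) hg_le hgnn (by linarith)
        _ = ((∑' s, |θ s| * finW β (2 * k) s) + 1) * C * kNorm a m x := by ring
    constructor
    · intro x hx k hk
      obtain ⟨m, C, hC, h⟩ := key k hk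
      exact (h x hx).1
    · intro k hk
      obtain ⟨m, C, hC, h⟩ := key k hk
      exact ⟨m, C, hC, fun x hx => (h x hx).2⟩
end
end

section
/- Let Λ_∞(α) be an infinite type power series space and K(b_{n,k}) a nuclear Köthe space, and θ_0 ≠ 0. The upper triangular Toeplitz operator Ť_θ : Λ_∞(α) → K(b_{n,k}) is compact if and only if θ ∈ (Λ_∞(α))′ and there exists m ∈ ℕ such that for every k ∈ ℕ there is C > 0 with b_{n,k} ≤ C e^{m α_n} for all n ∈ ℕ. -/
open scoped BigOperators
noncomputable section

section Aux

lemma infW_pos (α : ℕ → ℝ) (m n : ℕ) : 0 < infW α m n := Real.exp_pos _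

lemma bmono_chain (b : ℕ → ℕ → ℝ) (hb : IsKotheMatrix b) {k l : ℕ} (h : k ≤ l) (n : ℕ) :
    b n k ≤ b n l := by
  induction l, h using Nat.le_induction with
  | base => exact le_rfl
  | succ l hl ih => exact ih.trans (hb.mono n l)

lemma checkT_unitVec (θ : ℕ → ℝ) (n j : ℕ) :
    checkT θ (unitVec n) j = if j ≤ n then θ (n - j) else 0 := by
  unfold checkT unitVec
  split_ifs with h
  · rw [tsum_eq_single (n - j)]
    · simp [Nat.add_sub_cancel' h]
    · intro i hi
      have hji : j + i ≠ n := by omega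
      simp [hji]
  · have h0 : ∀ i, θ i * (if j + i = n then (1:ℝ) else 0) = 0 := by
      intro i
      have hji : j + i ≠ n := by omega
      simp [hji]
    simp only [h0, tsum_zero]

lemma memInf_unitVec (α : ℕ → ℝ) (n : ℕ) : memInf α (unitVec n) := by
  intro k _
  apply summable_of_ne_finset_zero (s := Finset.range (n + 1))
  intro j hj
  have : j ≠ n := by simp at hj; omega
  simp [unitVec, this]

lemma infNorm_unitVec (α : ℕ → ℝ) (m n : ℕ) : infNorm α m (unitVec n) = infW α m n := by
  unfold infNorm unitVec
  rw [tsum_eq_single n]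
  · simp
  · intro j hj; simp [hj]

lemma summable_checkT_unitVec (θ : ℕ → ℝ) (b : ℕ → ℕ → ℝ) (k n : ℕ) :
    Summable fun j => |checkT θ (unitVec n) j| * b j k := by
  apply summable_of_ne_finset_zero (s := Finset.range (n + 1))
  intro j hj
  have : ¬ j ≤ n := by simp at hj; omega
  rw [checkT_unitVec, if_neg this]
  simp

end Aux

/-- `Ť_θ : Λ_∞(α) → K(b)` (with `K(b)` nuclear) is compact iff
`θ ∈ (Λ_∞(α))'` and there is `m` such that for every `k` there is `C > 0` with
`b_{n,k} ≤ C e^{m α_n}` for all `n`. -/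

theorem stmt13 (α : ℕ → ℝ) (hα0 : ∀ n, 0 ≤ α n) (hαm : Monotone α)
    (hαi : Filter.Tendsto α Filter.atTop Filter.atTop)
    (b : ℕ → ℕ → ℝ) (hb : IsKotheMatrix b) (hnb : IsNuclearKothe b)
    (θ : ℕ → ℝ) (hθ : θ 0 ≠ 0) :
    ((∀ x, memInf α x → InKothe b (checkT θ x)) ∧
      ∃ m, ∀ k, ∃ C > 0, ∀ x, memInf α x →
        kNorm b k (checkT θ x) ≤ C * infNorm α m x)
    ↔ ((∃ m, ∃ C > 0, ∀ n, |θ n| ≤ C * infW α m n) ∧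
       ∃ m, ∀ k, ∃ C > 0, ∀ n, b n k ≤ C * infW α m n) := by
  constructor
  · rintro ⟨-, m, h2⟩
    have keyle : ∀ k n (j : ℕ), j ≤ n →
        |θ (n - j)| * b j k ≤ kNorm b k (checkT θ (unitVec n)) := by
      intro k n j hjn
      have h := Summable.le_tsum (summable_checkT_unitVec θ b k n) j
        (fun i _ => mul_nonneg (abs_nonneg _) (hb.nonneg i k))
      rwa [checkT_unitVec, if_pos hjn] at h
    constructor
    · obtain ⟨k0, hk0⟩ := hb.pos 0
      obtain ⟨C, hC, hCb⟩ := h2 k0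
      refine ⟨m, C / b 0 k0, div_pos hC hk0, fun n => ?_⟩
      have h3 := hCb (unitVec n) (memInf_unitVec α n)
      rw [infNorm_unitVec] at h3
      have h4 := (keyle k0 n 0 (Nat.zero_le n)).trans h3
      rw [Nat.sub_zero] at h4
      rw [div_mul_eq_mul_div, le_div_iff₀ hk0]
      linarith
    · refine ⟨m, fun k => ?_⟩
      obtain ⟨C, hC, hCb⟩ := h2 k
      have hθ0 : 0 < |θ 0| := abs_pos.mpr hθ
      refine ⟨C / |θ 0|, div_pos hC hθ0, fun n => ?_⟩
      have h3 := hCb (unitVec n) (memInf_unitVec α n)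
      rw [infNorm_unitVec] at h3
      have h4 := (keyle k n n le_rfl).trans h3
      rw [Nat.sub_self] at h4
      rw [div_mul_eq_mul_div, le_div_iff₀ hθ0]
      linarith
  · rintro ⟨⟨m₀, C₀, hC₀, hθb⟩, m₁, hbb⟩
    set M : ℕ := m₀ + m₁ + 1 with hMdef
    -- basic facts
    have hg : ∀ x, memInf α x → Summable fun s => |x s| * infW α M s :=
      fun x hx => hx M (by omega)
    have hw : ∀ i j : ℕ, infW α m₀ i * infW α m₁ j ≤ infW α M (j + i) := by
      intro i j
      unfold infW
      rw [← Real.exp_add]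
      apply Real.exp_le_exp.mpr
      have h1 : α i ≤ α (j + i) := hαm (by omega)
      have h2 : α j ≤ α (j + i) := hαm (by omega)
      have h3 : 0 ≤ α (j + i) := hα0 _
      have hm : (M : ℝ) = (m₀ : ℝ) + m₁ + 1 := by rw [hMdef]; push_cast; ring
      rw [hm]
      have c0 : (0:ℝ) ≤ m₀ := Nat.cast_nonneg _
      have c1 : (0:ℝ) ≤ m₁ := Nat.cast_nonneg _
      nlinarith [hα0 i, hα0 j]
    have hinj : ∀ j : ℕ, Function.Injective (fun i : ℕ => j + i) :=
      fun j a c h => by dsimp only at h; omega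
    -- per-j summability and bound
    have hsum_i : ∀ x, memInf α x → ∀ j, Summable fun i => |θ i * x (j + i)| := by
      intro x hx j
      refine Summable.of_nonneg_of_le (fun i => abs_nonneg _) (fun i => ?_)
        (((hg x hx).comp_injective (hinj j)).mul_left C₀)
      · rw [abs_mul]
        calc |θ i| * |x (j + i)| ≤ (C₀ * infW α m₀ i) * |x (j + i)| :=
              mul_le_mul_of_nonneg_right (hθb i) (abs_nonneg _)
          _ ≤ C₀ * (|x (j + i)| * infW α M (j + i)) := by
              have h2 : (1:ℝ) ≤ infW α m₁ j := by
                unfold infW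
                rw [← Real.exp_zero]
                exact Real.exp_le_exp.mpr (mul_nonneg (Nat.cast_nonneg _) (hα0 j))
              have h1 : infW α m₀ i ≤ infW α M (j + i) := by
                nlinarith [hw i j, infW_pos α m₀ i, infW_pos α m₁ j]
              calc (C₀ * infW α m₀ i) * |x (j + i)|
                  = (C₀ * |x (j + i)|) * infW α m₀ i := by ring
                _ ≤ (C₀ * |x (j + i)|) * infW α M (j + i) :=
                    mul_le_mul_of_nonneg_left h1 (mul_nonneg hC₀.le (abs_nonneg _))
                _ = C₀ * (|x (j + i)| * infW α M (j + i)) := by ring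
    have hB : ∀ x, memInf α x → ∀ j,
        |checkT θ x j| * infW α m₁ j ≤ C₀ * infNorm α M x := by
      intro x hx j
      have h1 : |checkT θ x j| ≤ ∑' i, |θ i * x (j + i)| := by
        have := norm_tsum_le_tsum_norm (f := fun i => θ i * x (j + i))
          (by simp only [Real.norm_eq_abs]; exact hsum_i x hx j)
        simp only [Real.norm_eq_abs] at this
        exact this
      calc |checkT θ x j| * infW α m₁ j
          ≤ (∑' i, |θ i * x (j + i)|) * infW α m₁ j :=
            mul_le_mul_of_nonneg_right h1 (infW_pos α m₁ j).le
        _ = ∑' i, |θ i * x (j + i)| * infW α m₁ j := (tsum_mul_right).symm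
        _ ≤ ∑' s, C₀ * (|x s| * infW α M s) := by
            apply Summable.tsum_le_tsum_of_inj (fun i : ℕ => j + i) (hinj j)
            · intro c _
              exact mul_nonneg hC₀.le (mul_nonneg (abs_nonneg _) (infW_pos α M c).le)
            · intro i
              rw [abs_mul]
              calc |θ i| * |x (j + i)| * infW α m₁ j
                  ≤ C₀ * infW α m₀ i * |x (j + i)| * infW α m₁ j :=
                    mul_le_mul_of_nonneg_right
                      (mul_le_mul_of_nonneg_right (hθb i) (abs_nonneg _))
                      (infW_pos α m₁ j).le
                _ = (C₀ * |x (j + i)|) * (infW α m₀ i * infW α m₁ j) := by ring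
                _ ≤ (C₀ * |x (j + i)|) * infW α M (j + i) :=
                    mul_le_mul_of_nonneg_left (hw i j)
                      (mul_nonneg hC₀.le (abs_nonneg _))
                _ = C₀ * (|x (j + i)| * infW α M (j + i)) := by ring
            · exact ((hsum_i x hx j).mul_right _)
            · exact (hg x hx).mul_left C₀
        _ = C₀ * ∑' s, |x s| * infW α M s := tsum_mul_left
        _ = C₀ * infNorm α M x := rfl
    -- master per-k statement
    have master : ∀ k, ∃ C > 0, ∀ x, memInf α x →
        (Summable fun j => |checkT θ x j| * b j k) ∧
        kNorm b k (checkT θ x) ≤ C * infNorm α M x := by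
      intro k
      obtain ⟨l, hkl, hS⟩ := hnb k
      obtain ⟨Cl, hCl, hbl⟩ := hbb l
      set S : ℝ := ∑' j, b j k / b j l with hSdef
      have hS0 : 0 ≤ S :=
        tsum_nonneg fun j => div_nonneg (hb.nonneg j k) (hb.nonneg j l)
      refine ⟨C₀ * Cl * (S + 1), by positivity, fun x hx => ?_⟩
      have hN0 : 0 ≤ infNorm α M x :=
        tsum_nonneg fun s => mul_nonneg (abs_nonneg _) (infW_pos α M s).le
      have hterm : ∀ j, |checkT θ x j| * b j k ≤
          (b j k / b j l) * (C₀ * Cl * infNorm α M x) := by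
        intro j
        rcases eq_or_lt_of_le (hb.nonneg j l) with h0 | hpos
        · have hk0 : b j k = 0 :=
            le_antisymm (by rw [h0]; exact bmono_chain b hb hkl.le j) (hb.nonneg j k)
          simp [hk0]
        · have h1 : |checkT θ x j| * b j l ≤ Cl * (C₀ * infNorm α M x) := by
            calc |checkT θ x j| * b j l ≤ |checkT θ x j| * (Cl * infW α m₁ j) :=
                  mul_le_mul_of_nonneg_left (hbl j) (abs_nonneg _)
              _ = Cl * (|checkT θ x j| * infW α m₁ j) := by ring
              _ ≤ Cl * (C₀ * infNorm α M x) :=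
                  mul_le_mul_of_nonneg_left (hB x hx j) hCl.le
          calc |checkT θ x j| * b j k
              = (b j k / b j l) * (|checkT θ x j| * b j l) := by
                field_simp [hpos.ne']
            _ ≤ (b j k / b j l) * (Cl * (C₀ * infNorm α M x)) :=
                mul_le_mul_of_nonneg_left h1
                  (div_nonneg (hb.nonneg j k) (hb.nonneg j l))
            _ = (b j k / b j l) * (C₀ * Cl * infNorm α M x) := by ring
      have hsumk : Summable fun j => |checkT θ x j| * b j k :=
        Summable.of_nonneg_of_le
          (fun j => mul_nonneg (abs_nonneg _) (hb.nonneg j k)) hterm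
          (hS.mul_right _)
      refine ⟨hsumk, ?_⟩
      calc kNorm b k (checkT θ x)
          ≤ ∑' j, (b j k / b j l) * (C₀ * Cl * infNorm α M x) :=
            Summable.tsum_le_tsum hterm hsumk (hS.mul_right _)
        _ = S * (C₀ * Cl * infNorm α M x) := tsum_mul_right
        _ ≤ (S + 1) * (C₀ * Cl * infNorm α M x) :=
            mul_le_mul_of_nonneg_right (by linarith)
              (mul_nonneg (mul_nonneg hC₀.le hCl.le) hN0)
        _ = C₀ * Cl * (S + 1) * infNorm α M x := by ring
    constructor
    · intro x hx k
      obtain ⟨C, -, hC⟩ := master k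
      exact (hC x hx).1
    · refine ⟨M, fun k => ?_⟩
      obtain ⟨C, hCpos, hC⟩ := master k
      exact ⟨C, hCpos, fun x hx => (hC x hx).2⟩
end
end
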